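/- Let p, q ∈ ℂ[X] be nonzero polynomials that are squarefree and coprime, and let Λ ∈ ℂ. Then {p,q}_Λ = 0 if and only if: for every root x of p one has p''(x)·q(x) − 2Λ·p'(x)·q'(x) = 0, and for every root y of q one has Λ²·p(y)·q''(y) − 2Λ·p'(y)·q'(y) = 0. (This is the vanishing-residue characterization: the conditions say that q^{2Λ}/p² and p^{2/Λ}/q² have no simple poles.) -/

import Mathlib

open Polynomial

private lemma degC_mul_le (a : ℂ) (r : ℂ[X]) : (C a * r).degree ≤ r.degree := by
  refine le_trans (degree_mul_le _ _) ?_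
  calc (C a).degree + r.degree ≤ 0 + r.degree := add_le_add degree_C_le le_rfl
    _ = r.degree := zero_add _

private lemma mul_deg_lt_left {p q a b : ℂ[X]} (hp : p ≠ 0) (hq : q ≠ 0)
    (ha : a.degree < p.degree) (hb : b.degree ≤ q.degree) :
    (a * b).degree < p.degree + q.degree := by
  have hbot : (⊥ : WithBot ℕ) < p.degree + q.degree := by
    rw [← degree_mul]
    exact Ne.bot_lt fun h => mul_ne_zero hp hq (degree_eq_bot.mp h)
  rcases eq_or_ne b 0 with rfl | hb0
  · simpa using hbot
  · rw [degree_mul]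
    exact WithBot.add_lt_add_of_lt_of_le (fun h => hb0 (degree_eq_bot.mp h)) ha hb

private lemma mul_deg_lt_right {p q a b : ℂ[X]} (hp : p ≠ 0) (hq : q ≠ 0)
    (ha : a.degree ≤ p.degree) (hb : b.degree < q.degree) :
    (a * b).degree < p.degree + q.degree := by
  have hbot : (⊥ : WithBot ℕ) < p.degree + q.degree := by
    rw [← degree_mul]
    exact Ne.bot_lt fun h => mul_ne_zero hp hq (degree_eq_bot.mp h)
  rcases eq_or_ne a 0 with rfl | ha0
  · simpa using hbot
  · rw [degree_mul]
    exact WithBot.add_lt_add_of_le_of_lt (fun h => ha0 (degree_eq_bot.mp h)) ha hb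

/-- Vanishing-residue characterization: for squarefree coprime nonzero `p, q`,
`{p,q}_Λ = 0` iff the residue conditions hold at every root of `p` and of `q`. -/
theorem bilinear_iff_residues_vanish
    (Λ : ℂ) (p q : ℂ[X]) (hp : p ≠ 0) (hq : q ≠ 0)
    (hsp : Squarefree p) (hsq : Squarefree q) (hpq : IsCoprime p q) :
    derivative (derivative p) * q - 2 * C Λ * derivative p * derivative q
        + C Λ ^ 2 * p * derivative (derivative q) = 0 ↔
      ((∀ x : ℂ, p.IsRoot x →
          (derivative (derivative p)).eval x * q.eval x
            - 2 * Λ * (derivative p).eval x * (derivative q).eval x = 0) ∧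
       (∀ y : ℂ, q.IsRoot y →
          Λ ^ 2 * p.eval y * (derivative (derivative q)).eval y
            - 2 * Λ * (derivative p).eval y * (derivative q).eval y = 0)) := by
  set F : ℂ[X] := derivative (derivative p) * q - 2 * C Λ * derivative p * derivative q
      + C Λ ^ 2 * p * derivative (derivative q) with hFdef
  constructor
  · intro h
    constructor
    · intro x hx
      have h0 : F.eval x = 0 := by rw [h]; simp
      have hx0 : p.eval x = 0 := hx
      simp only [hFdef, eval_add, eval_sub, eval_mul, eval_pow, eval_C, eval_ofNat, hx0] at h0
      linear_combination h0
    · intro y hy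
      have h0 : F.eval y = 0 := by rw [h]; simp
      have hy0 : q.eval y = 0 := hy
      simp only [hFdef, eval_add, eval_sub, eval_mul, eval_pow, eval_C, eval_ofNat, hy0] at h0
      linear_combination h0
  · rintro ⟨h1, h2⟩
    by_cases hF0 : F = 0
    · exact hF0
    have hpq0 : p * q ≠ 0 := mul_ne_zero hp hq
    have hsqf : Squarefree (p * q) := squarefree_mul_iff.mpr ⟨hpq.isRelPrime, hsp, hsq⟩
    have hsep : (p * q).Separable := PerfectField.separable_iff_squarefree.mpr hsqf
    have hnodup : (p * q).roots.Nodup := nodup_roots hsep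
    have hcard : (p * q).roots.card = (p * q).natDegree :=
      splits_iff_card_roots.mp (IsAlgClosed.splits _)
    -- degree bound
    have hA : (derivative (derivative p) * q).degree < p.degree + q.degree :=
      mul_deg_lt_left hp hq
        (lt_of_le_of_lt (degree_derivative_le) (degree_derivative_lt hp)) le_rfl
    have hB : (2 * C Λ * derivative p * derivative q).degree < p.degree + q.degree := by
      have he : 2 * C Λ * derivative p = C (2 * Λ) * derivative p := by
        rw [C_mul, map_ofNat]
      refine mul_deg_lt_left hp hq ?_ degree_derivative_le
      rw [he]
      exact lt_of_le_of_lt (degC_mul_le _ _) (degree_derivative_lt hp)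
    have hC : (C Λ ^ 2 * p * derivative (derivative q)).degree < p.degree + q.degree := by
      have he : C Λ ^ 2 * p = C (Λ ^ 2) * p := by rw [C_pow]
      refine mul_deg_lt_right hp hq ?_
        (lt_of_le_of_lt (degree_derivative_le) (degree_derivative_lt hq))
      rw [he]
      exact degC_mul_le _ _
    have hdeg : F.degree < (p * q).degree := by
      rw [degree_mul, hFdef]
      refine lt_of_le_of_lt (degree_add_le _ _) (max_lt ?_ hC)
      exact lt_of_le_of_lt (degree_sub_le _ _) (max_lt hA hB)
    have hnd : F.natDegree < (p * q).natDegree := natDegree_lt_natDegree hF0 hdeg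
    -- F vanishes on all roots of p*q
    have heval : ∀ z ∈ (p * q).roots.toFinset, F.eval z = 0 := by
      intro z hz
      have hz' : (p * q).eval z = 0 := by
        have := Multiset.mem_toFinset.mp hz
        exact (mem_roots hpq0).mp this
      rw [eval_mul] at hz'
      rcases mul_eq_zero.mp hz' with h0 | h0
      · have := h1 z h0
        simp only [hFdef, eval_add, eval_sub, eval_mul, eval_pow, eval_C, eval_ofNat, h0]
        linear_combination this
      · have := h2 z h0
        simp only [hFdef, eval_add, eval_sub, eval_mul, eval_pow, eval_C, eval_ofNat, h0]
        linear_combination this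
    refine eq_zero_of_natDegree_lt_card_of_eval_eq_zero' F _ heval ?_
    rwa [Multiset.toFinset_card_of_nodup hnodup, hcard]
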